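/- Let Z = P₀, P₁, …, P_k (k > 2) be a zig-zag: P_i = P₀ + i·Δx + (i mod 2)·Δy for perpendicular nonzero vectors Δx, Δy in ℝ². Let the graph on {P₀, …, P_k} have exactly the edges P_iP_{i+1}. For t > 1, this graph is a t-spanner (every pair u, w satisfies shortest-path distance ≤ t·dist(u,w)) if and only if ‖Δy‖/‖Δx‖ ≤ √(t² − 1). -/

import Mathlib

noncomputable abbrev P2 := EuclideanSpace ℝ (Fin 2)

/-- The total Euclidean length of a polygonal path given by a list of points. -/
noncomputable def pathLength {α : Type*} [PseudoMetricSpace α] (l : List α) : ℝ :=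
  (List.zipWith dist l l.tail).sum

/-- `l` is a walk from `u` to `v` whose consecutive pairs satisfy `Edge`. -/
def IsPath {α : Type*} (Edge : α → α → Prop) (u v : α) (l : List α) : Prop :=
  l.Chain' Edge ∧ l.head? = some u ∧ l.getLast? = some v

/-- The i-th vertex of the zig-zag with origin P₀ and vectors Δx, Δy. -/
noncomputable def zigzag (P₀ Δx Δy : P2) (i : ℕ) : P2 :=
  P₀ + i • Δx + (i % 2) • Δy

lemma norm_comb (Δx Δy : P2) (hperp : (inner ℝ Δx Δy : ℝ) = 0) (c d : ℝ) :
    ‖c • Δx + d • Δy‖ = Real.sqrt (c ^ 2 * ‖Δx‖ ^ 2 + d ^ 2 * ‖Δy‖ ^ 2) := by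
  rw [← Real.sqrt_sq (norm_nonneg (c • Δx + d • Δy))]
  congr 1
  rw [norm_add_sq_real]
  rw [real_inner_smul_left, real_inner_smul_right, hperp]
  simp [norm_smul, mul_pow]

lemma zig_dist (P₀ Δx Δy : P2) (hperp : (inner ℝ Δx Δy : ℝ) = 0) (i j : ℕ) :
    dist (zigzag P₀ Δx Δy i) (zigzag P₀ Δx Δy j) =
      Real.sqrt (((i : ℝ) - j) ^ 2 * ‖Δx‖ ^ 2 +
        (((i % 2 : ℕ) : ℝ) - ((j % 2 : ℕ) : ℝ)) ^ 2 * ‖Δy‖ ^ 2) := by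
  rw [dist_eq_norm, ← norm_comb Δx Δy hperp]
  congr 1
  simp only [zigzag, ← Nat.cast_smul_eq_nsmul ℝ]
  module

lemma pathLength_cons₂ {α : Type*} [PseudoMetricSpace α] (a b : α) (l : List α) :
    pathLength (a :: b :: l) = dist a b + pathLength (b :: l) := by
  simp [pathLength]

lemma pathLength_eq {α : Type*} [PseudoMetricSpace α] {L : ℝ} :
    ∀ l : List α, l.Chain' (fun x y => dist x y = L) →
      pathLength l = ((l.length - 1 : ℕ) : ℝ) * L
  | [], _ => by simp [pathLength]
  | [a], _ => by simp [pathLength]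
  | a :: b :: l, h => by
      rw [List.Chain', List.isChain_cons_cons] at h
      rw [pathLength_cons₂, pathLength_eq (b :: l) h.2, h.1]
      simp only [List.length_cons, Nat.add_sub_cancel]
      push_cast
      ring

lemma zig_dist_adj (P₀ Δx Δy : P2) (hperp : (inner ℝ Δx Δy : ℝ) = 0) (a b : ℕ)
    (hab : a + 1 = b ∨ b + 1 = a) :
    dist (zigzag P₀ Δx Δy a) (zigzag P₀ Δx Δy b) = Real.sqrt (‖Δx‖ ^ 2 + ‖Δy‖ ^ 2) := by
  rw [zig_dist _ _ _ hperp]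
  have h1 : ((a : ℝ) - b) ^ 2 = 1 := by
    rcases hab with h | h <;> subst h <;> push_cast <;> ring
  have h2 : (((a % 2 : ℕ) : ℝ) - ((b % 2 : ℕ) : ℝ)) ^ 2 = 1 := by
    have : a % 2 = 0 ∧ b % 2 = 1 ∨ a % 2 = 1 ∧ b % 2 = 0 := by omega
    rcases this with ⟨ha, hb⟩ | ⟨ha, hb⟩ <;> rw [ha, hb] <;> norm_num
  rw [h1, h2, one_mul, one_mul]

lemma exists_path (k : ℕ) (P₀ Δx Δy : P2) (hperp : (inner ℝ Δx Δy : ℝ) = 0)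
    (i j : Fin (k + 1)) (m : ℕ) (g : ℕ → Fin (k + 1)) (h0 : g 0 = i) (hm : g m = j)
    (hadj : ∀ n < m, ((g n : ℕ) + 1 = g (n + 1) ∨ ((g (n + 1) : ℕ) + 1 = g n))) :
    ∃ l : List (Fin (k + 1)),
      IsPath (fun a b : Fin (k + 1) => (a : ℕ) + 1 = b ∨ (b : ℕ) + 1 = a) i j l ∧
      pathLength (l.map fun i : Fin (k + 1) => zigzag P₀ Δx Δy i) =
        (m : ℝ) * Real.sqrt (‖Δx‖ ^ 2 + ‖Δy‖ ^ 2) := by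
  refine ⟨(List.range (m + 1)).map g, ⟨?_, ?_, ?_⟩, ?_⟩
  · rw [List.Chain', List.isChain_map, List.isChain_range_succ]
    exact hadj
  · rw [List.range_succ_eq_map]
    simp [h0]
  · rw [List.getLast?_map, List.range_succ]
    simp [hm]
  · have hchain : ((List.range (m + 1)).map ((fun i : Fin (k + 1) => zigzag P₀ Δx Δy i) ∘ g)).Chain'
        (fun x y => dist x y = Real.sqrt (‖Δx‖ ^ 2 + ‖Δy‖ ^ 2)) := by
      rw [List.Chain', List.isChain_map, List.isChain_range_succ]
      intro n hn
      exact zig_dist_adj P₀ Δx Δy hperp _ _ (hadj n hn)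
    rw [List.map_map, pathLength_eq _ hchain]
    simp

lemma key_ineq (t a b : ℝ) (ht : 1 < t) (ha : 0 < a) (hb : 0 ≤ b)
    (h : b ^ 2 ≤ (t ^ 2 - 1) * a ^ 2) (m : ℕ) (e : ℝ) (he : e ^ 2 = 0 ∨ e ^ 2 = 1) :
    (m : ℝ) * Real.sqrt (a ^ 2 + b ^ 2) ≤
      t * Real.sqrt ((m : ℝ) ^ 2 * a ^ 2 + e ^ 2 * b ^ 2) := by
  have hL : (m : ℝ) * Real.sqrt (a ^ 2 + b ^ 2) =
      Real.sqrt ((m : ℝ) ^ 2 * (a ^ 2 + b ^ 2)) := by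
    rw [Real.sqrt_mul (by positivity), Real.sqrt_sq (by positivity)]
  have hR : t * Real.sqrt ((m : ℝ) ^ 2 * a ^ 2 + e ^ 2 * b ^ 2) =
      Real.sqrt (t ^ 2 * ((m : ℝ) ^ 2 * a ^ 2 + e ^ 2 * b ^ 2)) := by
    rw [Real.sqrt_mul (by positivity), Real.sqrt_sq (by linarith)]
  rw [hL, hR]
  apply Real.sqrt_le_sqrt
  rcases he with h0 | h1
  · rw [h0]
    nlinarith [mul_nonneg (sq_nonneg (m : ℝ)) (sub_nonneg.2 h)]
  · rw [h1]
    nlinarith [mul_nonneg (sq_nonneg (m : ℝ)) (sub_nonneg.2 h), sq_nonneg (t * b)]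

/-- Zig-zag spanner lemma: the path graph on the zig-zag P₀, …, P_k (k > 2)
is a t-spanner if and only if ‖Δy‖/‖Δx‖ ≤ √(t² − 1). -/
theorem stmt11 (t : ℝ) (ht : 1 < t) (k : ℕ) (hk : 2 < k)
    (P₀ Δx Δy : P2) (hperp : (inner ℝ Δx Δy : ℝ) = 0) (hx : Δx ≠ 0) (hy : Δy ≠ 0) :
    (∀ i j : Fin (k + 1), ∃ l : List (Fin (k + 1)),
        IsPath (fun a b : Fin (k + 1) => (a : ℕ) + 1 = b ∨ (b : ℕ) + 1 = a) i j l ∧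
        pathLength (l.map fun i : Fin (k + 1) => zigzag P₀ Δx Δy i) ≤
          t * dist (zigzag P₀ Δx Δy i) (zigzag P₀ Δx Δy j)) ↔
      ‖Δy‖ / ‖Δx‖ ≤ Real.sqrt (t ^ 2 - 1) := by
  have ha : 0 < ‖Δx‖ := norm_pos_iff.2 hx
  have ht2 : (0 : ℝ) ≤ t ^ 2 - 1 := by nlinarith
  set L : ℝ := Real.sqrt (‖Δx‖ ^ 2 + ‖Δy‖ ^ 2) with hLdef
  have hL0 : 0 ≤ L := Real.sqrt_nonneg _
  constructor
  · intro H
    obtain ⟨l, ⟨hc, hh, hl⟩, hlen⟩ := H ⟨0, by omega⟩ ⟨2, by omega⟩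
    have hdv : dist (zigzag P₀ Δx Δy ((⟨0, by omega⟩ : Fin (k + 1)) : ℕ))
        (zigzag P₀ Δx Δy ((⟨2, by omega⟩ : Fin (k + 1)) : ℕ)) = 2 * ‖Δx‖ := by
      have e0 : ((⟨0, by omega⟩ : Fin (k + 1)) : ℕ) = 0 := rfl
      have e2 : ((⟨2, by omega⟩ : Fin (k + 1)) : ℕ) = 2 := rfl
      rw [e0, e2, zig_dist _ _ _ hperp]
      have e3 : (((0 : ℕ) : ℝ) - ((2 : ℕ) : ℝ)) ^ 2 * ‖Δx‖ ^ 2 +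
          ((((0 : ℕ) % 2 : ℕ) : ℝ) - (((2 : ℕ) % 2 : ℕ) : ℝ)) ^ 2 * ‖Δy‖ ^ 2 =
          (2 * ‖Δx‖) ^ 2 := by norm_num; ring
      rw [e3, Real.sqrt_sq (by positivity)]
    have hplen := pathLength_eq (l.map fun i : Fin (k + 1) => zigzag P₀ Δx Δy i)
      ((List.isChain_map _).2
        (hc.imp fun a b hab => zig_dist_adj P₀ Δx Δy hperp _ _ hab))
    rw [List.length_map, ← hLdef] at hplen
    have h3 : 3 ≤ l.length := by
      rcases l with _ | ⟨x, _ | ⟨y, _ | ⟨z, r⟩⟩⟩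
      · simp at hh
      · simp at hh hl
        rw [hh] at hl
        exact absurd (congrArg Fin.val hl) (by norm_num)
      · simp at hh hl hc
        rw [hh, hl] at hc
        simp [List.Chain'] at hc
      · simp
    have h2L : 2 * L ≤ t * (2 * ‖Δx‖) := by
      have hcst : (2 : ℝ) ≤ ((l.length - 1 : ℕ) : ℝ) := by
        exact_mod_cast Nat.le_sub_of_add_le (by omega)
      calc 2 * L ≤ ((l.length - 1 : ℕ) : ℝ) * L := by nlinarith
        _ ≤ t * (2 * ‖Δx‖) := by rw [← hplen, ← hdv]; exact hlen
    have hLa : L ≤ t * ‖Δx‖ := by linarith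
    have hsq : ‖Δx‖ ^ 2 + ‖Δy‖ ^ 2 ≤ t ^ 2 * ‖Δx‖ ^ 2 := by
      nlinarith [Real.sq_sqrt (show (0:ℝ) ≤ ‖Δx‖ ^ 2 + ‖Δy‖ ^ 2 by positivity)]
    rw [Real.le_sqrt (by positivity) ht2, div_pow, div_le_iff₀ (by positivity)]
    nlinarith
  · intro h i j
    have hb2 : ‖Δy‖ ^ 2 ≤ (t ^ 2 - 1) * ‖Δx‖ ^ 2 := by
      rw [div_le_iff₀ ha] at h
      have h2 := pow_le_pow_left₀ (norm_nonneg Δy) h 2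
      rw [mul_pow, Real.sq_sqrt ht2] at h2
      linarith
    have hpar : ((((i : ℕ) % 2 : ℕ) : ℝ) - (((j : ℕ) % 2 : ℕ) : ℝ)) ^ 2 = 0 ∨
        ((((i : ℕ) % 2 : ℕ) : ℝ) - (((j : ℕ) % 2 : ℕ) : ℝ)) ^ 2 = 1 := by
      have h5 : (i : ℕ) % 2 = 0 ∨ (i : ℕ) % 2 = 1 := by omega
      have h6 : (j : ℕ) % 2 = 0 ∨ (j : ℕ) % 2 = 1 := by omega
      rcases h5 with h5 | h5 <;> rcases h6 with h6 | h6 <;> rw [h5, h6] <;> norm_num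
    rcases le_or_gt (i : ℕ) (j : ℕ) with hij | hij
    · obtain ⟨l, hp, hpl⟩ := exists_path k P₀ Δx Δy hperp i j ((j : ℕ) - (i : ℕ))
        (fun n => ⟨min ((i : ℕ) + n) (j : ℕ), lt_of_le_of_lt (min_le_right _ _) j.isLt⟩)
        (by apply Fin.ext; simp; omega) (by apply Fin.ext; simp; omega)
        (by intro n hn; left; simp; omega)
      refine ⟨l, hp, ?_⟩
      rw [hpl, zig_dist _ _ _ hperp]
      have h4 : (((i : ℕ) : ℝ) - ((j : ℕ) : ℝ)) ^ 2 = ((((j : ℕ) - (i : ℕ) : ℕ)) : ℝ) ^ 2 := by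
        have : ((j : ℕ) : ℝ) = ((i : ℕ) : ℝ) + ((((j : ℕ) - (i : ℕ) : ℕ)) : ℝ) := by
          exact_mod_cast congrArg (Nat.cast : ℕ → ℝ) (by omega :
            (j : ℕ) = (i : ℕ) + ((j : ℕ) - (i : ℕ)))
        rw [this]; ring
      rw [h4]
      exact key_ineq t _ _ ht ha (norm_nonneg Δy) hb2 _ _ hpar
    · obtain ⟨l, hp, hpl⟩ := exists_path k P₀ Δx Δy hperp i j ((i : ℕ) - (j : ℕ))
        (fun n => ⟨(i : ℕ) - n, lt_of_le_of_lt (Nat.sub_le _ _) i.isLt⟩)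
        (by apply Fin.ext; simp) (by apply Fin.ext; simp; omega)
        (by intro n hn; right; simp; omega)
      refine ⟨l, hp, ?_⟩
      rw [hpl, zig_dist _ _ _ hperp]
      have h4 : (((i : ℕ) : ℝ) - ((j : ℕ) : ℝ)) ^ 2 = ((((i : ℕ) - (j : ℕ) : ℕ)) : ℝ) ^ 2 := by
        have : ((i : ℕ) : ℝ) = ((j : ℕ) : ℝ) + ((((i : ℕ) - (j : ℕ) : ℕ)) : ℝ) := by
          exact_mod_cast congrArg (Nat.cast : ℕ → ℝ) (by omega :
            (i : ℕ) = (j : ℕ) + ((i : ℕ) - (j : ℕ)))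
        rw [this]; ring
      rw [h4]
      exact key_ineq t _ _ ht ha (norm_nonneg Δy) hb2 _ _ hpar
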